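/- arXiv:2009.08865 — 3 statements merged into one kernel-verified Lean document; each statement's English description precedes it below -/
import Mathlib

section
/- The map sending a permutation to its odd diagram is injective on the set of 312-avoiding permutations in S_n: if v ≠ w both avoid the pattern 312, then D_o(v) ≠ D_o(w). -/
def oddDiagram {n : ℕ} (w : Equiv.Perm (Fin n)) : Finset (Fin n × Fin n) :=
  Finset.univ.filter (fun p => (p.2 : ℕ) < (w p.1 : ℕ) ∧ (p.1 : ℕ) < (w.symm p.2 : ℕ) ∧
    (p.1 : ℕ) % 2 ≠ (w.symm p.2 : ℕ) % 2)

def invLength {n : ℕ} (w : Equiv.Perm (Fin n)) : ℕ :=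
  (Finset.univ.filter (fun p : Fin n × Fin n => p.1 < p.2 ∧ w p.2 < w p.1)).card

def bruhatLE {n : ℕ} : Equiv.Perm (Fin n) → Equiv.Perm (Fin n) → Prop :=
  Relation.ReflTransGen (fun u v => ∃ t : Equiv.Perm (Fin n), t.IsSwap ∧ v = u * t ∧ invLength u < invLength v)

def contains213 {n : ℕ} (w : Equiv.Perm (Fin n)) : Prop :=
  ∃ i h j : Fin n, i < h ∧ h < j ∧ w h < w i ∧ w i < w j

def contains312 {n : ℕ} (w : Equiv.Perm (Fin n)) : Prop :=
  ∃ i h j : Fin n, i < h ∧ h < j ∧ w h < w j ∧ w j < w i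

lemma mem_oddDiagram {n : ℕ} (w : Equiv.Perm (Fin n)) (p : Fin n × Fin n) :
    p ∈ oddDiagram w ↔ (p.2 : ℕ) < (w p.1 : ℕ) ∧ (p.1 : ℕ) < (w.symm p.2 : ℕ) ∧
      (p.1 : ℕ) % 2 ≠ (w.symm p.2 : ℕ) % 2 := by
  simp [oddDiagram]

lemma oddDiagram_key {n : ℕ} (v w : Equiv.Perm (Fin n)) (hw : ¬ contains312 w)
    (heq : oddDiagram v = oddDiagram w) (i : Fin n)
    (hmin : ∀ j : Fin n, j < i → v j = w j) (hlt : v i < w i) : False := by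
  set p : Fin n := w.symm (v i) with hp
  have hwp : w p = v i := w.apply_symm_apply (v i)
  -- i < p
  have hip : (i : ℕ) < (p : ℕ) := by
    rcases lt_trichotomy p i with h | h | h
    · have := hmin p h
      have : v p = v i := by rw [this, hwp]
      have : p = i := v.injective this
      exact absurd this (ne_of_lt h)
    · rw [h] at hwp; exact absurd hwp.symm (ne_of_lt hlt)
    · exact h
  -- parity: (i, v i) ∉ oddDiagram v, hence ∉ oddDiagram w, forcing same parity
  have hpar : (i : ℕ) % 2 = (p : ℕ) % 2 := by
    by_contra hpar
    have hmem : (i, v i) ∈ oddDiagram w := by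
      rw [mem_oddDiagram]
      exact ⟨hlt, hip, hpar⟩
    rw [← heq, mem_oddDiagram] at hmem
    exact lt_irrefl _ hmem.1
  have hip2 : (i : ℕ) + 1 < (p : ℕ) := by omega
  have hn : (i : ℕ) + 1 < n := lt_trans hip2 p.isLt
  set h : Fin n := ⟨(i : ℕ) + 1, hn⟩ with hh
  have hhp : h ≠ p := by
    intro e
    have : (h : ℕ) = (p : ℕ) := congrArg Fin.val e
    simp only [hh] at this; omega
  -- w h > v i, else (i, i+1, p) is a 312 pattern in w
  have hwh : (v i : ℕ) < (w h : ℕ) := by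
    rcases lt_trichotomy (w h) (v i) with hc | hc | hc
    · exact absurd ⟨i, h, p, by simp [hh, Fin.lt_def], by simp [hh, Fin.lt_def, hip2],
        by rw [hwp]; exact hc, by rw [hwp]; exact hlt⟩ hw
    · exact absurd (w.injective (hc.trans hwp.symm)) hhp
    · exact hc
  -- cell (h, v i) ∈ oddDiagram w but not in oddDiagram v
  have hmem : (h, v i) ∈ oddDiagram w := by
    rw [mem_oddDiagram]
    refine ⟨hwh, ?_, ?_⟩ <;> simp only [← hp, hh] <;> omega
  rw [← heq, mem_oddDiagram] at hmem
  have := hmem.2.1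
  rw [Equiv.symm_apply_apply] at this
  simp [hh] at this

theorem stmt3 {n : ℕ} (v w : Equiv.Perm (Fin n)) (hv : ¬ contains312 v)
    (hw : ¬ contains312 w) (hne : v ≠ w) :
    oddDiagram v ≠ oddDiagram w := by
  intro heq
  have hS : (Finset.univ.filter (fun j : Fin n => v j ≠ w j)).Nonempty := by
    rw [Finset.filter_nonempty_iff]
    by_contra hc
    push_neg at hc
    exact hne (Equiv.ext fun j => hc j (Finset.mem_univ _))
  set i := (Finset.univ.filter (fun j : Fin n => v j ≠ w j)).min' hS with hi
  have hmem : i ∈ Finset.univ.filter (fun j : Fin n => v j ≠ w j) :=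
    Finset.min'_mem _ hS
  have hdiff : v i ≠ w i := (Finset.mem_filter.mp hmem).2
  have hmin : ∀ j : Fin n, j < i → v j = w j := by
    intro j hj
    by_contra hc
    exact absurd (Finset.min'_le _ j (Finset.mem_filter.mpr ⟨Finset.mem_univ _, hc⟩))
      (not_le_of_gt hj)
  rcases lt_or_gt_of_ne hdiff with hlt | hlt
  · exact oddDiagram_key v w hw heq i hmin hlt
  · exact oddDiagram_key w v hv heq.symm i (fun j hj => (hmin j hj).symm) hlt
end

section
/- Suppose v ~ w with v ≠ w (same odd diagram). Let k+1 be minimal with v^{-1}(k+1) ≠ w^{-1}(k+1), and assume b := v^{-1}(k+1) < c := w^{-1}(k+1). Then v̄ := v·(b c) satisfies D_o(v̄) = D_o(v) and ℓ(v̄) > ℓ(v), where ℓ denotes the number of inversions. -/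
lemma mem_odd' {n : ℕ} (u : Equiv.Perm (Fin n)) (i j : Fin n) :
    (i, j) ∈ oddDiagram u ↔ ((j : ℕ) < (u i : ℕ) ∧ (i : ℕ) < (u.symm j : ℕ) ∧
      (i : ℕ) % 2 ≠ (u.symm j : ℕ) % 2) := by
  simp [oddDiagram]

lemma mul_swap_symm' {n : ℕ} (v : Equiv.Perm (Fin n)) (b c j : Fin n) :
    (v * Equiv.swap b c).symm j = Equiv.swap b c (v.symm j) := by
  have h : (v * Equiv.swap b c).symm = (v * Equiv.swap b c)⁻¹ := rfl
  rw [h, mul_inv_rev]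
  simp [Equiv.Perm.mul_apply]

theorem stmt7 {n : ℕ} (v w : Equiv.Perm (Fin n)) (hsim : oddDiagram v = oddDiagram w)
    (hne : v ≠ w) (k : Fin n)
    (hmin : ∀ m : Fin n, m < k → v.symm m = w.symm m)
    (hk : v.symm k ≠ w.symm k) (hbc : v.symm k < w.symm k) :
    oddDiagram (v * Equiv.swap (v.symm k) (w.symm k)) = oddDiagram v ∧
      invLength v < invLength (v * Equiv.swap (v.symm k) (w.symm k)) := by
  classical
  set b := v.symm k with hbdef
  set c := w.symm k with hcdef
  set s := Equiv.swap b c with hsdef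
  have hvb : v b = k := v.apply_symm_apply k
  have hwc : w c = k := w.apply_symm_apply k
  have hbltc : b < c := hbc
  have hbnec : b ≠ c := ne_of_lt hbltc
  have hbcN : (b : ℕ) < (c : ℕ) := hbltc
  -- values below k are at the same positions in v and w
  have hlowv : ∀ i : Fin n, v i < k → w i = v i := by
    intro i h
    have h1 : v.symm (v i) = w.symm (v i) := hmin (v i) h
    have h2 : w.symm (v i) = i := by rw [← h1, Equiv.symm_apply_apply]
    calc w i = w (w.symm (v i)) := by rw [h2]
      _ = v i := w.apply_symm_apply _
  have hloww : ∀ i : Fin n, w i < k → v i = w i := by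
    intro i h
    have h1 : v.symm (w i) = w.symm (w i) := hmin (w i) h
    have h2 : v.symm (w i) = i := by rw [h1, Equiv.symm_apply_apply]
    calc v i = v (v.symm (w i)) := by rw [h2]
      _ = w i := v.apply_symm_apply _
  -- k < v c
  have hvck : k < v c := by
    rcases lt_trichotomy (v c) k with h | h | h
    · have h1 := hlowv c h
      rw [hwc] at h1
      rw [← h1] at h
      exact absurd h (lt_irrefl k)
    · exfalso
      apply hbnec
      rw [hbdef, ← h, Equiv.symm_apply_apply]
    · exact h
  have hvckN : (k : ℕ) < (v c : ℕ) := hvck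
  -- k < w b
  have hwbk : k < w b := by
    rcases lt_trichotomy (w b) k with h | h | h
    · have h1 := hloww b h
      rw [hvb] at h1
      rw [← h1] at h
      exact absurd h (lt_irrefl k)
    · exfalso
      apply hbnec
      rw [hcdef, ← h, Equiv.symm_apply_apply]
    · exact h
  -- diagram equality transfer
  have hDo : ∀ i j : Fin n,
      ((j : ℕ) < (v i : ℕ) ∧ (i : ℕ) < (v.symm j : ℕ) ∧ (i : ℕ) % 2 ≠ (v.symm j : ℕ) % 2) ↔
      ((j : ℕ) < (w i : ℕ) ∧ (i : ℕ) < (w.symm j : ℕ) ∧ (i : ℕ) % 2 ≠ (w.symm j : ℕ) % 2) := by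
    intro i j
    rw [← mem_odd', ← mem_odd', hsim]
  -- fact 1 : b and c have the same parity
  have hpar : (b : ℕ) % 2 = (c : ℕ) % 2 := by
    by_contra hne2
    have h1 := (hDo b k).mpr ⟨hwbk, hbcN, hne2⟩
    have : (b : ℕ) < (v.symm k : ℕ) := h1.2.1
    rw [← hbdef] at this
    omega
  -- fact 2
  have hfact2 : ∀ i : Fin n, b < i → i < c → (i : ℕ) % 2 ≠ (c : ℕ) % 2 → (v i : ℕ) < (k : ℕ) := by
    intro i h1 h2 h3
    by_contra hge
    push_neg at hge
    have hib : i ≠ b := ne_of_gt h1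
    have hvik : v i ≠ k := by
      intro h
      apply hib
      rw [hbdef, ← h, Equiv.symm_apply_apply]
    have hklt : (k : ℕ) < (v i : ℕ) := lt_of_le_of_ne hge (fun h => hvik (Fin.val_injective h.symm))
    have hwik : (k : ℕ) < (w i : ℕ) := by
      rcases lt_trichotomy (w i) k with h | h | h
      · have := hloww i h
        have : (v i : ℕ) < (k : ℕ) := by rw [this]; exact h
        omega
      · exfalso
        apply ne_of_lt h2
        rw [hcdef, ← h, Equiv.symm_apply_apply]
      · exact h
    have hmem := (hDo i k).mpr ⟨hwik, h2, h3⟩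
    have : (i : ℕ) < (v.symm k : ℕ) := hmem.2.1
    rw [← hbdef] at this
    have h1N : (b : ℕ) < (i : ℕ) := h1
    omega
  -- fact 3
  have hfact3 : ∀ i : Fin n, c < i → (k : ℕ) < (v i : ℕ) → (v i : ℕ) < (v c : ℕ) →
      (i : ℕ) % 2 = (c : ℕ) % 2 := by
    intro i h1 h2 h3
    by_contra hne2
    have hsymm : v.symm (v i) = i := Equiv.symm_apply_apply v i
    have hmem := (hDo c (v i)).mp (by
      refine ⟨h3, ?_, ?_⟩
      · rw [hsymm]; exact h1
      · rw [hsymm]; exact fun h => hne2 h.symm)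
    have : (v i : ℕ) < (w c : ℕ) := hmem.1
    rw [hwc] at this
    omega
  -- combined key fact : if b < i, i ≠ c, and i has parity different from b, then
  -- v i < k or v c < v i
  have hkey : ∀ i : Fin n, (b : ℕ) < (i : ℕ) → i ≠ c → (i : ℕ) % 2 ≠ (b : ℕ) % 2 →
      (v i : ℕ) < (k : ℕ) ∨ (v c : ℕ) < (v i : ℕ) := by
    intro i h1 h2 h3
    rcases lt_trichotomy i c with h | h | h
    · left
      exact hfact2 i h1 h (by omega)
    · exact absurd h h2
    · by_contra hcon
      push_neg at hcon
      obtain ⟨hc1, hc2⟩ := hcon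
      have hib : i ≠ b := by
        intro h'
        rw [h'] at h1
        omega
      have hvik : v i ≠ k := by
        intro h'
        apply hib
        rw [hbdef, ← h', Equiv.symm_apply_apply]
      have hvic : v i ≠ v c := fun h' => h2 (v.injective h')
      have hk1 : (k : ℕ) < (v i : ℕ) :=
        lt_of_le_of_ne hc1 (fun h' => hvik (Fin.val_injective h'.symm))
      have hk2 : (v i : ℕ) < (v c : ℕ) :=
        lt_of_le_of_ne hc2 (fun h' => hvic (Fin.val_injective h'))
      have := hfact3 i h hk1 hk2
      omega
  -- swap computations
  have hsb : s b = c := Equiv.swap_apply_left b c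
  have hsc : s c = b := Equiv.swap_apply_right b c
  have hso : ∀ x : Fin n, x ≠ b → x ≠ c → s x = x := fun x h1 h2 =>
    Equiv.swap_apply_of_ne_of_ne h1 h2
  have hss : ∀ x : Fin n, s (s x) = x := fun x => Equiv.swap_apply_self b c x
  constructor
  · -- diagram equality
    ext ⟨i, j⟩
    rw [mem_odd', mem_odd']
    have e1 : ((v * s) i : ℕ) = (v (s i) : ℕ) := rfl
    have e2 : ((v * s).symm j : ℕ) = (s (v.symm j) : ℕ) := by rw [mul_swap_symm']
    rw [e1, e2]
    set t := v.symm j with htdef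
    have hj : j = v t := (v.apply_symm_apply j).symm
    rw [hj]
    by_cases htb : t = b
    · rw [htb, hsb, hvb]
      by_cases hib : i = b
      · rw [hib, hsb]
        constructor
        · rintro ⟨-, -, h3⟩
          exact absurd hpar h3
        · rintro ⟨h1, -, -⟩
          rw [hvb] at h1
          omega
      · by_cases hic : i = c
        · rw [hic, hsc, hvb]
          constructor
          · rintro ⟨h1, -, -⟩
            omega
          · rintro ⟨-, h2, -⟩
            omega
        · rw [hso i hib hic]
          constructor
          · rintro ⟨h1, h2, h3⟩
            refine ⟨h1, ?_, by omega⟩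
            rcases lt_trichotomy i b with h | h | h
            · exact Fin.lt_def.mp h
            · exact absurd h hib
            · exfalso
              have hbi : (b : ℕ) < (i : ℕ) := h
              have hic2 : i < c := Fin.lt_def.mpr h2
              have := hfact2 i h hic2 h3
              omega
          · rintro ⟨h1, h2, h3⟩
            exact ⟨h1, by omega, by omega⟩
    · by_cases htc : t = c
      · rw [htc, hsc]
        by_cases hib : i = b
        · rw [hib, hsb, hvb]
          constructor
          · rintro ⟨-, h2, -⟩
            omega
          · rintro ⟨h1, -, -⟩
            omega
        · by_cases hic : i = c
          · rw [hic, hsc, hvb]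
            constructor
            · rintro ⟨h1, -, -⟩
              omega
            · rintro ⟨-, h2, -⟩
              omega
          · rw [hso i hib hic]
            constructor
            · rintro ⟨h1, h2, h3⟩
              exact ⟨h1, by omega, by omega⟩
            · rintro ⟨h1, h2, h3⟩
              refine ⟨h1, ?_, by omega⟩
              rcases lt_trichotomy i b with h | h | h
              · exact Fin.lt_def.mp h
              · exact absurd h hib
              · exfalso
                have hic2 : i < c := Fin.lt_def.mpr h2
                have := hfact2 i h hic2 (by omega)
                omega
      · rw [hso t htb htc]
        have hvtk : v t ≠ k := by
          intro h'
          apply htb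
          rw [hbdef, ← h', Equiv.symm_apply_apply]
        have hvtkN : (v t : ℕ) ≠ (k : ℕ) := fun h' => hvtk (Fin.val_injective h')
        by_cases hib : i = b
        · rw [hib, hsb, hvb]
          constructor
          · rintro ⟨h1, h2, h3⟩
            refine ⟨?_, h2, h3⟩
            rcases hkey t h2 htc (by omega) with h | h
            · exact h
            · omega
          · rintro ⟨h1, h2, h3⟩
            exact ⟨by omega, h2, h3⟩
        · by_cases hic : i = c
          · rw [hic, hsc, hvb]
            constructor
            · rintro ⟨h1, h2, h3⟩
              exact ⟨by omega, h2, h3⟩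
            · rintro ⟨h1, h2, h3⟩
              refine ⟨?_, h2, h3⟩
              have hct : c < t := Fin.lt_def.mpr h2
              rcases lt_trichotomy ((v t : ℕ)) ((k : ℕ)) with h | h | h
              · exact h
              · exact absurd h hvtkN
              · exfalso
                have := hfact3 t hct h h1
                omega
          · rw [hso i hib hic]
  · -- length increases
    set φ : Fin n × Fin n → Fin n × Fin n :=
      fun p => if s p.1 < s p.2 then (s p.1, s p.2) else p with hphi
    set Sv := Finset.univ.filter (fun p : Fin n × Fin n => p.1 < p.2 ∧ v p.2 < v p.1) with hSv
    set Sv' := Finset.univ.filter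
      (fun p : Fin n × Fin n => p.1 < p.2 ∧ (v * s) p.2 < (v * s) p.1) with hSv'
    have hmemSv : ∀ p : Fin n × Fin n, p ∈ Sv ↔ (p.1 < p.2 ∧ v p.2 < v p.1) := by
      intro p; rw [hSv]; simp
    have hmemSv' : ∀ p : Fin n × Fin n, p ∈ Sv' ↔ (p.1 < p.2 ∧ (v * s) p.2 < (v * s) p.1) := by
      intro p; rw [hSv']; simp only [Finset.mem_filter, Finset.mem_univ, true_and]
    have hbcmem : ((b, c) : Fin n × Fin n) ∈ Sv' := by
      rw [hmemSv']
      refine ⟨hbltc, ?_⟩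
      show v (s c) < v (s b)
      rw [hsc, hsb, hvb]
      exact hvck
    have hinj : Set.InjOn φ ↑Sv := by
      intro p hp q hq heq
      have hp' : p.1 < p.2 := ((hmemSv p).mp (Finset.mem_coe.mp hp)).1
      have hq' : q.1 < q.2 := ((hmemSv q).mp (Finset.mem_coe.mp hq)).1
      simp only [hphi] at heq
      split_ifs at heq with h1 h2 h2
      · rw [Prod.mk.injEq] at heq
        have e1 : p.1 = q.1 := s.injective heq.1
        have e2 : p.2 = q.2 := s.injective heq.2
        exact Prod.ext e1 e2
      · exfalso
        apply h2
        have e1 : q.1 = s p.1 := by rw [← heq]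
        have e2 : q.2 = s p.2 := by rw [← heq]
        rw [e1, e2, hss, hss]
        exact hp'
      · exfalso
        apply h1
        have e1 : p.1 = s q.1 := by rw [heq]
        have e2 : p.2 = s q.2 := by rw [heq]
        rw [e1, e2, hss, hss]
        exact hq'
      · exact heq
    have himage : Sv.image φ ⊆ Sv'.erase (b, c) := by
      intro q hq
      rw [Finset.mem_image] at hq
      obtain ⟨p, hp, rfl⟩ := hq
      rw [hmemSv] at hp
      obtain ⟨hp1, hp2⟩ := hp
      rw [Finset.mem_erase]
      by_cases h : s p.1 < s p.2
      · have hphip : φ p = (s p.1, s p.2) := if_pos h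
        rw [hphip]
        constructor
        · intro heq
          rw [Prod.mk.injEq] at heq
          have e1 : p.1 = c := by rw [← hss p.1, heq.1, hsb]
          have e2 : p.2 = b := by rw [← hss p.2, heq.2, hsc]
          rw [e1, e2] at hp1
          exact absurd hp1 (not_lt.mpr (le_of_lt hbltc))
        · rw [hmemSv']
          refine ⟨h, ?_⟩
          show v (s (s p.2)) < v (s (s p.1))
          rw [hss, hss]
          exact hp2
      · have hphip : φ p = p := if_neg h
        rw [hphip]
        by_cases hjc : p.2 = c
        · by_cases hib : p.1 = b
          · exfalso
            rw [hib, hjc, hvb] at hp2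
            exact absurd hp2 (not_lt.mpr (le_of_lt hvck))
          · have hic : p.1 ≠ c := by
              intro h'
              rw [h', hjc] at hp1
              exact lt_irrefl _ hp1
            refine ⟨?_, ?_⟩
            · intro heq
              rw [Prod.mk.injEq] at heq
              exact hib heq.1
            · rw [hmemSv']
              refine ⟨hp1, ?_⟩
              show v (s p.2) < v (s p.1)
              rw [hjc, hsc, hvb, hso p.1 hib hic]
              have h1 : (v c : ℕ) < (v p.1 : ℕ) := by
                rw [← hjc]
                exact Fin.lt_def.mp hp2
              exact Fin.lt_def.mpr (by omega)
        · by_cases hib : p.1 = b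
          · have hjb : p.2 ≠ b := by
              intro h'
              rw [hib, h'] at hp1
              exact lt_irrefl _ hp1
            refine ⟨?_, ?_⟩
            · intro heq
              rw [Prod.mk.injEq] at heq
              exact hjc heq.2
            · rw [hmemSv']
              refine ⟨hp1, ?_⟩
              show v (s p.2) < v (s p.1)
              rw [hib, hsb, hso p.2 hjb hjc]
              have h1 : (v p.2 : ℕ) < (k : ℕ) := by
                have h2 := hp2
                rw [hib, hvb] at h2
                exact Fin.lt_def.mp h2
              exact Fin.lt_def.mpr (by omega)
          · exfalso
            apply h
            by_cases hic : p.1 = c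
            · have hjb : p.2 ≠ b := by
                intro h'
                rw [hic, h'] at hp1
                exact absurd hp1 (not_lt.mpr (le_of_lt hbltc))
              rw [hic, hsc, hso p.2 hjb hjc]
              have h1 : (c : ℕ) < (p.2 : ℕ) := by
                rw [← hic]
                exact Fin.lt_def.mp hp1
              exact Fin.lt_def.mpr (by omega)
            · by_cases hjb : p.2 = b
              · have h1 : (p.1 : ℕ) < (b : ℕ) := by
                  rw [← hjb]
                  exact Fin.lt_def.mp hp1
                rw [hjb, hsb, hso p.1 hib hic]
                exact Fin.lt_def.mpr (by omega)
              · rw [hso p.1 hib hic, hso p.2 hjb hjc]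
                exact hp1
    have hL1 : invLength v = Sv.card := rfl
    have hL2 : invLength (v * s) = Sv'.card := rfl
    rw [hL1, hL2]
    calc Sv.card = (Sv.image φ).card := (Finset.card_image_of_injOn hinj).symm
      _ ≤ (Sv'.erase (b, c)).card := Finset.card_le_card himage
      _ < Sv'.card := Finset.card_erase_lt_of_mem hbcmem
end

section
/- For every odd diagram D and n, if w in Perm_n(D) = {z in S_n : D_o(z) = D} avoids the pattern 213, then w ≥ u in Bruhat order for all u in Perm_n(D); in particular Perm_n(D) contains at most one 213-avoiding permutation. -/
lemma mem_oD {n : ℕ} {u : Equiv.Perm (Fin n)} {x y : Fin n} :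
    (x, y) ∈ oddDiagram u ↔ ((y:ℕ) < (u x : ℕ) ∧ (x:ℕ) < (u.symm y : ℕ) ∧ (x:ℕ) % 2 ≠ (u.symm y : ℕ) % 2) := by
  unfold oddDiagram
  rw [Finset.mem_filter]
  simp only [Finset.mem_univ, true_and]

lemma symm_mul_swap {n : ℕ} (u : Equiv.Perm (Fin n)) (i j y : Fin n) :
    (u * Equiv.swap i j).symm y = Equiv.swap i j (u.symm y) := by
  rw [Equiv.symm_apply_eq]
  simp [Equiv.Perm.mul_apply]

lemma val_ne_of_ne {n : ℕ} {u : Equiv.Perm (Fin n)} {a b : Fin n} (h : a ≠ b) :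
    (u a : ℕ) ≠ (u b : ℕ) := by
  intro hv
  exact h (u.injective (Fin.val_injective hv))

lemma crit {n : ℕ} (u : Equiv.Perm (Fin n)) (i j : Fin n)
    (hij : (i:ℕ) < j) (hpar : (i:ℕ) % 2 = (j:ℕ) % 2) (hval : (u i : ℕ) < u j)
    (hC1 : ∀ k : Fin n, (i:ℕ) < k → (k:ℕ) < j → (k:ℕ) % 2 ≠ (i:ℕ) % 2 → (u k : ℕ) < u i)
    (hC2 : ∀ m : Fin n, (i:ℕ) < m → (m:ℕ) % 2 ≠ (i:ℕ) % 2 → ¬((u i : ℕ) < u m ∧ (u m : ℕ) < u j)) :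
    oddDiagram (u * Equiv.swap i j) = oddDiagram u := by
  have hne : i ≠ j := fun h => by simp [h] at hij
  ext ⟨x, y⟩
  rw [mem_oD, mem_oD, symm_mul_swap]
  have happ : ∀ t : Fin n, (u * Equiv.swap i j) t = u (Equiv.swap i j t) := fun _ => rfl
  rw [happ]
  set z := u.symm y with hzdef
  have hy : (u z : ℕ) = (y : ℕ) := by rw [hzdef, u.apply_symm_apply]
  by_cases hxi : x = i
  · rw [hxi]
    by_cases hzi : z = i
    · rw [hzi] at hy ⊢
      rw [Equiv.swap_apply_left]
      omega
    · by_cases hzj : z = j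
      · rw [hzj] at hy ⊢
        rw [Equiv.swap_apply_left, Equiv.swap_apply_right]
        omega
      · rw [Equiv.swap_apply_left, Equiv.swap_apply_of_ne_of_ne hzi hzj]
        have h2 : (i:ℕ) < z → (z:ℕ) % 2 ≠ (i:ℕ) % 2 → ¬((u i : ℕ) < u z ∧ (u z : ℕ) < u j) :=
          fun a b => hC2 z a b
        have hyne : (u z : ℕ) ≠ (u i : ℕ) := val_ne_of_ne hzi
        omega
  · by_cases hxj : x = j
    · rw [hxj]
      by_cases hzi : z = i
      · rw [hzi] at hy ⊢
        rw [Equiv.swap_apply_right, Equiv.swap_apply_left]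
        omega
      · by_cases hzj : z = j
        · rw [hzj] at hy ⊢
          rw [Equiv.swap_apply_right]
          omega
        · rw [Equiv.swap_apply_right, Equiv.swap_apply_of_ne_of_ne hzi hzj]
          have h2 : (i:ℕ) < z → (z:ℕ) % 2 ≠ (i:ℕ) % 2 → ¬((u i : ℕ) < u z ∧ (u z : ℕ) < u j) :=
            fun a b => hC2 z a b
          have hyne : (u z : ℕ) ≠ (u i : ℕ) := val_ne_of_ne hzi
          omega
    · by_cases hzi : z = i
      · rw [hzi] at hy ⊢
        rw [Equiv.swap_apply_of_ne_of_ne hxi hxj, Equiv.swap_apply_left]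
        have h1 : (i:ℕ) < x → (x:ℕ) < j → (x:ℕ) % 2 ≠ (i:ℕ) % 2 → (u x : ℕ) < u i :=
          fun a b c => hC1 x a b c
        have hxne : (x:ℕ) ≠ (j:ℕ) := fun h => hxj (Fin.val_injective h)
        have hxnei : (x:ℕ) ≠ (i:ℕ) := fun h => hxi (Fin.val_injective h)
        omega
      · by_cases hzj : z = j
        · rw [hzj] at hy ⊢
          rw [Equiv.swap_apply_of_ne_of_ne hxi hxj, Equiv.swap_apply_right]
          have h1 : (i:ℕ) < x → (x:ℕ) < j → (x:ℕ) % 2 ≠ (i:ℕ) % 2 → (u x : ℕ) < u i :=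
            fun a b c => hC1 x a b c
          have hxne : (x:ℕ) ≠ (i:ℕ) := fun h => hxi (Fin.val_injective h)
          have hxnej : (x:ℕ) ≠ (j:ℕ) := fun h => hxj (Fin.val_injective h)
          omega
        · rw [Equiv.swap_apply_of_ne_of_ne hxi hxj, Equiv.swap_apply_of_ne_of_ne hzi hzj]

lemma invLength_lt_swap {n : ℕ} (u : Equiv.Perm (Fin n)) (i j : Fin n)
    (hij : (i:ℕ) < j) (hval : (u i : ℕ) < u j) :
    invLength u < invLength (u * Equiv.swap i j) := by
  classical
  have hne : i ≠ j := fun h => by simp [h] at hij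
  set v := u * Equiv.swap i j with hv
  have hvi : v i = u j := by rw [hv]; simp [Equiv.Perm.mul_apply]
  have hvj : v j = u i := by rw [hv]; simp [Equiv.Perm.mul_apply]
  have hvk : ∀ k : Fin n, k ≠ i → k ≠ j → v k = u k := by
    intro k h1 h2
    rw [hv]
    show u (Equiv.swap i j k) = u k
    rw [Equiv.swap_apply_of_ne_of_ne h1 h2]
  set A := Finset.univ.filter (fun p : Fin n × Fin n => p.1 < p.2 ∧ u p.2 < u p.1) with hA
  set B := Finset.univ.filter (fun p : Fin n × Fin n => p.1 < p.2 ∧ v p.2 < v p.1) with hB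
  have memA : ∀ p : Fin n × Fin n, p ∈ A ↔ ((p.1:ℕ) < p.2 ∧ (u p.2 : ℕ) < u p.1) := by
    intro p; rw [hA, Finset.mem_filter]
    simp only [Finset.mem_univ, true_and, Fin.lt_def]
  have memB : ∀ p : Fin n × Fin n, p ∈ B ↔ ((p.1:ℕ) < p.2 ∧ (v p.2 : ℕ) < v p.1) := by
    intro p; rw [hB, Finset.mem_filter]
    simp only [Finset.mem_univ, true_and, Fin.lt_def]
  -- the injection
  set Φ : Fin n × Fin n → Fin n × Fin n := fun p =>
    if p.1 = i then (if (j:ℕ) < p.2 then (j, p.2) else p)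
    else if p.2 = i then (p.1, j)
    else if p.1 = j then (i, p.2)
    else if p.2 = j ∧ (p.1:ℕ) < i then (p.1, i)
    else p with hΦ
  set Ψ : Fin n × Fin n → Fin n × Fin n := fun r =>
    if r.1 = j then (i, r.2)
    else if r.1 = i then (if (j:ℕ) < r.2 then (j, r.2) else r)
    else if r.2 = i then (r.1, j)
    else if r.2 = j ∧ (r.1:ℕ) < i then (r.1, i)
    else r with hΨ
  have pair_ne : ∀ a b c d : Fin n, (a:ℕ) ≠ c → (a, b) ≠ (c, d) := by
    intro a b c d h hh
    rw [Prod.mk.injEq] at hh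
    exact h (congrArg Fin.val hh.1)
  have pair_ne2 : ∀ a b c d : Fin n, (b:ℕ) ≠ d → (a, b) ≠ (c, d) := by
    intro a b c d h hh
    rw [Prod.mk.injEq] at hh
    exact h (congrArg Fin.val hh.2)
  have hvalne : ∀ a b : Fin n, a ≠ b → (u a : ℕ) ≠ (u b : ℕ) := by
    intro a b h hv
    exact h (u.injective (Fin.val_injective hv))
  have hkey : ∀ p ∈ A, (Φ p ∈ B ∧ Φ p ≠ (i, j)) ∧ Ψ (Φ p) = p := by
    rintro ⟨p1, p2⟩ hp
    rw [memA] at hp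
    obtain ⟨hlt, hval2⟩ := hp
    simp only at hlt hval2
    have hnij : (i:ℕ) ≠ (j:ℕ) := by omega
    have hjne : j ≠ i := Ne.symm hne
    by_cases h1i : p1 = i
    · have hip2 : (i:ℕ) < (p2:ℕ) := by rw [← h1i]; exact hlt
      have hupi : (u p2 : ℕ) < (u i : ℕ) := by rw [← h1i]; exact hval2
      have h2i : p2 ≠ i := fun h => by rw [h] at hip2; omega
      by_cases hjp2 : (j:ℕ) < (p2:ℕ)
      · have h2j : p2 ≠ j := fun h => by rw [h] at hjp2; omega
        have hΦp : Φ (p1, p2) = (j, p2) := by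
          rw [hΦ]; dsimp only; rw [if_pos h1i, if_pos hjp2]
        refine ⟨⟨?_, ?_⟩, ?_⟩
        · rw [hΦp, memB]; dsimp only
          refine ⟨hjp2, ?_⟩
          rw [hvj, hvk p2 h2i h2j]
          exact hupi
        · rw [hΦp]; exact pair_ne _ _ _ _ (Ne.symm hnij)
        · rw [hΦp, hΨ]; dsimp only
          rw [if_pos rfl, h1i]
      · have h2j : p2 ≠ j := fun h => by rw [h] at hupi; omega
        have hΦp : Φ (p1, p2) = (p1, p2) := by
          rw [hΦ]; dsimp only; rw [if_pos h1i, if_neg hjp2]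
        have h1j : p1 ≠ j := fun h => hne (h1i.symm.trans h)
        refine ⟨⟨?_, ?_⟩, ?_⟩
        · rw [hΦp, memB]; dsimp only
          refine ⟨hlt, ?_⟩
          rw [h1i, hvi, hvk p2 h2i h2j]
          omega
        · rw [hΦp]; exact pair_ne2 _ _ _ _ (fun h => h2j (Fin.val_injective h))
        · rw [hΦp, hΨ]; dsimp only
          rw [if_neg h1j, if_pos h1i, if_neg hjp2]
    · by_cases h2i : p2 = i
      · have hp1i : (p1:ℕ) < (i:ℕ) := by rw [← h2i]; exact hlt
        have huip1 : (u i : ℕ) < (u p1 : ℕ) := by rw [← h2i]; exact hval2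
        have h1j : p1 ≠ j := fun h => by
          rw [h] at hp1i; omega
        refine ⟨⟨?_, ?_⟩, ?_⟩
        · rw [hΦ]; dsimp only
          rw [if_neg h1i, if_pos h2i, memB]; dsimp only
          refine ⟨by omega, ?_⟩
          rw [hvj, hvk p1 h1i h1j]
          exact huip1
        · rw [hΦ]; dsimp only
          rw [if_neg h1i, if_pos h2i]
          exact pair_ne _ _ _ _ (fun h => h1i (Fin.val_injective h))
        · rw [hΦ]; dsimp only
          rw [if_neg h1i, if_pos h2i, hΨ]; dsimp only
          rw [if_neg h1j, if_neg h1i, if_neg hjne, if_pos ⟨rfl, hp1i⟩, h2i]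
      · by_cases h1j : p1 = j
        · have hjp2 : (j:ℕ) < (p2:ℕ) := by rw [← h1j]; exact hlt
          have hup2 : (u p2 : ℕ) < (u j : ℕ) := by rw [← h1j]; exact hval2
          have h2j : p2 ≠ j := fun h => by rw [h] at hjp2; omega
          refine ⟨⟨?_, ?_⟩, ?_⟩
          · rw [hΦ]; dsimp only
            rw [if_neg h1i, if_neg h2i, if_pos h1j, memB]; dsimp only
            refine ⟨by omega, ?_⟩
            rw [hvi, hvk p2 h2i h2j]
            omega
          · rw [hΦ]; dsimp only
            rw [if_neg h1i, if_neg h2i, if_pos h1j]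
            exact pair_ne2 _ _ _ _ (fun h => h2j (Fin.val_injective h))
          · rw [hΦ]; dsimp only
            rw [if_neg h1i, if_neg h2i, if_pos h1j, hΨ]; dsimp only
            rw [if_neg hne, if_pos rfl, if_pos hjp2, h1j]
        · by_cases h2j : p2 = j
          · by_cases hp1lt : (p1:ℕ) < (i:ℕ)
            · have hujp1 : (u j : ℕ) < (u p1 : ℕ) := by rw [← h2j]; exact hval2
              refine ⟨⟨?_, ?_⟩, ?_⟩
              · rw [hΦ]; dsimp only
                rw [if_neg h1i, if_neg h2i, if_neg h1j, if_pos ⟨h2j, hp1lt⟩, memB]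
                dsimp only
                refine ⟨hp1lt, ?_⟩
                rw [hvi, hvk p1 h1i h1j]
                omega
              · rw [hΦ]; dsimp only
                rw [if_neg h1i, if_neg h2i, if_neg h1j, if_pos ⟨h2j, hp1lt⟩]
                exact pair_ne _ _ _ _ (by omega)
              · rw [hΦ]; dsimp only
                rw [if_neg h1i, if_neg h2i, if_neg h1j, if_pos ⟨h2j, hp1lt⟩, hΨ]
                dsimp only
                rw [if_neg h1j, if_neg h1i, if_pos rfl, h2j]
            · have hujp1 : (u j : ℕ) < (u p1 : ℕ) := by rw [← h2j]; exact hval2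
              have hΦp : Φ (p1, p2) = (p1, p2) := by
                rw [hΦ]; dsimp only
                rw [if_neg h1i, if_neg h2i, if_neg h1j,
                  if_neg (by rintro ⟨-, h⟩; exact hp1lt h)]
              refine ⟨⟨?_, ?_⟩, ?_⟩
              · rw [hΦp, memB]; dsimp only
                refine ⟨hlt, ?_⟩
                rw [h2j, hvj, hvk p1 h1i h1j]
                omega
              · rw [hΦp]; exact pair_ne _ _ _ _ (fun h => h1i (Fin.val_injective h))
              · rw [hΦp, hΨ]; dsimp only
                rw [if_neg h1j, if_neg h1i, if_neg h2i,
                  if_neg (by rintro ⟨-, h⟩; exact hp1lt h)]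
          · have hΦp : Φ (p1, p2) = (p1, p2) := by
              rw [hΦ]; dsimp only
              rw [if_neg h1i, if_neg h2i, if_neg h1j, if_neg (by rintro ⟨h, -⟩; exact h2j h)]
            refine ⟨⟨?_, ?_⟩, ?_⟩
            · rw [hΦp, memB]; dsimp only
              refine ⟨hlt, ?_⟩
              rw [hvk p1 h1i h1j, hvk p2 h2i h2j]
              exact hval2
            · rw [hΦp]; exact pair_ne _ _ _ _ (fun h => h1i (Fin.val_injective h))
            · rw [hΦp, hΨ]; dsimp only
              rw [if_neg h1j, if_neg h1i, if_neg h2i, if_neg (by rintro ⟨h, -⟩; exact h2j h)]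
  have hinj : Set.InjOn Φ A := by
    intro p hp q hq h
    rw [← (hkey p hp).2, ← (hkey q hq).2, h]
  have hcard : A.card ≤ (B.erase (i, j)).card := by
    apply Finset.card_le_card_of_injOn Φ
    · intro p hp
      exact Finset.mem_erase.2 ⟨(hkey p hp).1.2, (hkey p hp).1.1⟩
    · exact hinj
  have hmemij : (i, j) ∈ B := by
    rw [memB]
    exact ⟨hij, by rw [hvi, hvj]; exact hval⟩
  have h1 : invLength u = A.card := rfl
  have h2 : invLength v = B.card := rfl
  rw [h1, h2]
  calc A.card ≤ (B.erase (i, j)).card := hcard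
    _ < B.card := Finset.card_erase_lt_of_mem hmemij

lemma step {n : ℕ} (u z : Equiv.Perm (Fin n)) (hD : oddDiagram u = oddDiagram z)
    (i : Fin n) (hpre : ∀ k : Fin n, (k:ℕ) < (i:ℕ) → u k = z k) (hlt : (u i:ℕ) < (z i:ℕ)) :
    ∃ z' : Equiv.Perm (Fin n), oddDiagram z' = oddDiagram z ∧
      (∀ k : Fin n, (k:ℕ) < (i:ℕ) → z' k = z k) ∧ z' i = u i ∧
      (∀ v : Fin n, ((z'.symm v : ℕ)) % 2 = ((z.symm v : ℕ)) % 2) := by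
  classical
  set a := u i with ha
  set r := z.symm a with hr
  have hra : z r = a := z.apply_symm_apply a
  have hane : (a:ℕ) < (z i:ℕ) := hlt
  have hri : r ≠ i := by
    intro h
    rw [h] at hra
    rw [hra] at hane
    omega
  have hir : (i:ℕ) < (r:ℕ) := by
    rcases Nat.lt_or_ge (r:ℕ) (i:ℕ) with h | h
    · exfalso
      have h2 : u r = z r := hpre r h
      have h3 : u r = u i := by rw [h2, hra, ha]
      exact hri (u.injective h3)
    · rcases Nat.eq_or_lt_of_le h with h' | h'
      · exact absurd (Fin.val_injective h'.symm) hri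
      · exact h'
  have hpar : (r:ℕ) % 2 = (i:ℕ) % 2 := by
    by_contra hp
    have hmem : (i, a) ∈ oddDiagram z := by
      rw [mem_oD, ← hr]
      exact ⟨hane, hir, fun h => hp (h.symm)⟩
    rw [← hD, mem_oD] at hmem
    have : (a:ℕ) < (u i:ℕ) := hmem.1
    rw [← ha] at this
    omega
  have hC1 : ∀ k : Fin n, (i:ℕ) < k → (k:ℕ) < r → (k:ℕ) % 2 ≠ (i:ℕ) % 2 → (z k : ℕ) < a := by
    intro k hik hkr hkp
    by_contra hzk
    have hne2 : z k ≠ a := by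
      intro h
      have : k = r := by rw [← hra] at h; exact z.injective h
      rw [this] at hkr; omega
    have hane2 : (a:ℕ) < (z k:ℕ) := by
      rcases Nat.lt_or_ge (z k:ℕ) (a:ℕ) with h | h
      · exact absurd h hzk
      · rcases Nat.eq_or_lt_of_le h with h' | h'
        · exact absurd (Fin.val_injective h'.symm) hne2
        · exact h'
    have hmem : (k, a) ∈ oddDiagram z := by
      rw [mem_oD, ← hr]
      refine ⟨hane2, hkr, ?_⟩
      omega
    rw [← hD, mem_oD] at hmem
    have h2 : (k:ℕ) < (u.symm a:ℕ) := hmem.2.1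
    have : u.symm a = i := by rw [ha]; exact u.symm_apply_apply i
    rw [this] at h2
    omega
  have hC2 : ∀ m : Fin n, (i:ℕ) < m → (m:ℕ) % 2 ≠ (i:ℕ) % 2 →
      ¬((a:ℕ) < (z m:ℕ) ∧ (z m:ℕ) < (z i:ℕ)) := by
    rintro m him hmp ⟨h1, h2⟩
    have hmem : (i, z m) ∈ oddDiagram z := by
      rw [mem_oD]
      have : z.symm (z m) = m := z.symm_apply_apply m
      rw [this]
      exact ⟨h2, him, fun h => hmp h.symm⟩
    rw [← hD, mem_oD] at hmem
    have : (z m:ℕ) < (u i:ℕ) := hmem.1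
    rw [← ha] at this
    omega
  set z' := z * Equiv.swap i r with hz'
  have hz'i : z' i = a := by rw [hz']; show z (Equiv.swap i r i) = a; rw [Equiv.swap_apply_left, hra]
  have hz'r : z' r = z i := by rw [hz']; show z (Equiv.swap i r r) = z i; rw [Equiv.swap_apply_right]
  have hz'k : ∀ k : Fin n, k ≠ i → k ≠ r → z' k = z k := by
    intro k h1 h2
    rw [hz']; show z (Equiv.swap i r k) = z k
    rw [Equiv.swap_apply_of_ne_of_ne h1 h2]
  have hcrit := crit z' i r hir (hpar.symm) (by rw [hz'i, hz'r]; exact hane)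
    (by
      intro k hik hkr hkp
      have hk1 : k ≠ i := fun h => by rw [h] at hik; omega
      have hk2 : k ≠ r := fun h => by rw [h] at hkr; omega
      rw [hz'k k hk1 hk2, hz'i]
      exact hC1 k hik hkr hkp)
    (by
      rintro m him hmp ⟨h1, h2⟩
      have hm1 : m ≠ i := fun h => by rw [h] at him; omega
      by_cases hm2 : m = r
      · rw [hm2] at hmp; omega
      · rw [hz'k m hm1 hm2] at h1 h2
        rw [hz'i] at h1
        rw [hz'r] at h2
        exact hC2 m him hmp ⟨h1, h2⟩)
  have hzz : z' * Equiv.swap i r = z := by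
    rw [hz', mul_assoc, Equiv.swap_mul_self, mul_one]
  rw [hzz] at hcrit
  refine ⟨z', hcrit.symm, ?_, hz'i, ?_⟩
  · intro k hk
    exact hz'k k (fun h => by rw [h] at hk; omega) (fun h => by rw [h] at hk; omega)
  · intro v
    rw [hz', symm_mul_swap]
    by_cases h1 : z.symm v = i
    · rw [h1, Equiv.swap_apply_left]
      exact hpar
    · by_cases h2 : z.symm v = r
      · rw [h2, Equiv.swap_apply_right]
        omega
      · rw [Equiv.swap_apply_of_ne_of_ne h1 h2]

lemma parAux {n : ℕ} : ∀ g : ℕ, ∀ u z : Equiv.Perm (Fin n), oddDiagram u = oddDiagram z →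
    (∀ k : Fin n, (k:ℕ) + g < n → u k = z k) →
    ∀ v : Fin n, ((u.symm v:ℕ)) % 2 = ((z.symm v:ℕ)) % 2 := by
  intro g
  induction g with
  | zero =>
    intro u z hD hpre v
    have : u = z := Equiv.ext fun k => hpre k (by omega)
    rw [this]
  | succ g ih =>
    intro u z hD hpre v
    by_cases huz : u = z
    · rw [huz]
    · have hSne : (Finset.univ.filter (fun k : Fin n => u k ≠ z k)).Nonempty := by
        by_contra h
        rw [Finset.not_nonempty_iff_eq_empty, Finset.filter_eq_empty_iff] at h
        exact huz (Equiv.ext fun k => not_not.1 (h (Finset.mem_univ k)))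
      set i := Finset.min' _ hSne with hi
      have hidiff : u i ≠ z i := (Finset.mem_filter.1 (Finset.min'_mem _ hSne)).2
      have hpre_i : ∀ k : Fin n, (k:ℕ) < (i:ℕ) → u k = z k := by
        intro k hk
        by_contra hne
        have h2 : i ≤ k := Finset.min'_le _ k (Finset.mem_filter.2 ⟨Finset.mem_univ k, hne⟩)
        rw [Fin.le_def] at h2
        omega
      have hvne : (u i : ℕ) ≠ (z i : ℕ) := fun h => hidiff (Fin.val_injective h)
      rcases Nat.lt_or_ge (u i : ℕ) (z i : ℕ) with hlt | hge
      · obtain ⟨z', hD', hpre', hi', hpar'⟩ := step u z hD i hpre_i hlt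
        have hpre2 : ∀ k : Fin n, (k:ℕ) + g < n → u k = z' k := by
          intro k hk
          have hgi : ¬ ((i:ℕ) + (g+1) < n) := fun h => hidiff (hpre i h)
          have hki : (k:ℕ) ≤ (i:ℕ) := by omega
          rcases Nat.lt_or_eq_of_le hki with h | h
          · rw [hpre_i k h, hpre' k h]
          · have : k = i := Fin.val_injective h
            rw [this, hi']
        have hrec := ih u z' (hD.trans hD'.symm) hpre2 v
        rw [hrec, hpar' v]
      · have hlt : (z i : ℕ) < (u i : ℕ) := by omega
        obtain ⟨u', hD', hpre', hi', hpar'⟩ :=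
          step z u hD.symm i (fun k hk => (hpre_i k hk).symm) hlt
        have hpre2 : ∀ k : Fin n, (k:ℕ) + g < n → u' k = z k := by
          intro k hk
          have hgi : ¬ ((i:ℕ) + (g+1) < n) := fun h => hidiff (hpre i h)
          have hki : (k:ℕ) ≤ (i:ℕ) := by omega
          rcases Nat.lt_or_eq_of_le hki with h | h
          · rw [hpre' k h, hpre_i k h]
          · have : k = i := Fin.val_injective h
            rw [this, hi']
        have hrec := ih u' z (hD'.trans hD) hpre2 v
        rw [← hrec, hpar' v]

lemma parInv {n : ℕ} {u z : Equiv.Perm (Fin n)} (hD : oddDiagram u = oddDiagram z) :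
    ∀ v : Fin n, ((u.symm v:ℕ)) % 2 = ((z.symm v:ℕ)) % 2 :=
  parAux n u z hD (fun k hk => absurd hk (by omega))

lemma climbAux {n : ℕ} (w : Equiv.Perm (Fin n)) (hw : ¬ contains213 w) :
    ∀ g : ℕ, ∀ u : Equiv.Perm (Fin n), oddDiagram u = oddDiagram w →
    (∀ k : Fin n, (k:ℕ) + g < n → u k = w k) → bruhatLE u w := by
  intro g
  induction g with
  | zero =>
    intro u hD hpre
    have : u = w := Equiv.ext fun k => hpre k (by omega)
    rw [this]
    exact Relation.ReflTransGen.refl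
  | succ g ih =>
    intro u hD hpre
    by_cases huw : u = w
    · rw [huw]
      exact Relation.ReflTransGen.refl
    · have hSne : (Finset.univ.filter (fun k : Fin n => u k ≠ w k)).Nonempty := by
        by_contra h
        rw [Finset.not_nonempty_iff_eq_empty, Finset.filter_eq_empty_iff] at h
        exact huw (Equiv.ext fun k => not_not.1 (h (Finset.mem_univ k)))
      set i := Finset.min' _ hSne with hi
      have hidiff : u i ≠ w i := (Finset.mem_filter.1 (Finset.min'_mem _ hSne)).2
      have hpre_i : ∀ k : Fin n, (k:ℕ) < (i:ℕ) → u k = w k := by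
        intro k hk
        by_contra hne
        have h2 : i ≤ k := Finset.min'_le _ k (Finset.mem_filter.2 ⟨Finset.mem_univ k, hne⟩)
        rw [Fin.le_def] at h2
        omega
      have hvne : (u i : ℕ) ≠ (w i : ℕ) := fun h => hidiff (Fin.val_injective h)
      have hP := parInv hD
      -- position of any suffix opposite-parity u-value inside w
      have hposw : ∀ m : Fin n, (i:ℕ) < (m:ℕ) → (m:ℕ) % 2 ≠ (i:ℕ) % 2 →
          (i:ℕ) < (w.symm (u m):ℕ) ∧ ((w.symm (u m):ℕ)) % 2 ≠ (i:ℕ) % 2 := by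
        intro m him hmp
        have hpar : ((w.symm (u m):ℕ)) % 2 = (m:ℕ) % 2 := by
          have := hP (u m)
          rw [u.symm_apply_apply] at this
          omega
        constructor
        · rcases Nat.lt_trichotomy ((w.symm (u m):ℕ)) (i:ℕ) with h | h | h
          · exfalso
            have h1 : u (w.symm (u m)) = w (w.symm (u m)) := hpre_i _ h
            rw [w.apply_symm_apply] at h1
            have : w.symm (u m) = m := u.injective h1
            rw [this] at h
            omega
          · exfalso
            rw [h] at hpar
            omega
          · exact h
        · omega
      -- position of b=w i inside u
      set q := u.symm (w i) with hqdef
      have hq : u q = w i := u.apply_symm_apply (w i)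
      have hqpar : (q:ℕ) % 2 = (i:ℕ) % 2 := by
        have h0 := hP (w i)
        rw [w.symm_apply_apply] at h0
        rw [hqdef]
        omega
      have hqne : q ≠ i := fun h => hidiff (h ▸ hq)
      have hqgt : (i:ℕ) < (q:ℕ) := by
        rcases Nat.lt_trichotomy (q:ℕ) (i:ℕ) with h | h | h
        · exfalso
          have h1 : u q = w q := hpre_i _ h
          rw [hq] at h1
          have : q = i := w.injective h1.symm
          rw [this] at h
          omega
        · exact absurd (Fin.val_injective h) hqne
        · exact h
      -- main claim : u i < w i
      have hab : (u i : ℕ) < (w i : ℕ) := by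
        by_contra hcon
        have hba : (w i : ℕ) < (u i : ℕ) := by omega
        set p := w.symm (u i) with hpdef
        have hp : w p = u i := w.apply_symm_apply (u i)
        have hppar : (p:ℕ) % 2 = (i:ℕ) % 2 := by
          have h0 := hP (u i)
          rw [u.symm_apply_apply] at h0
          rw [hpdef]
          omega
        have hpne : p ≠ i := fun h => hidiff (by rw [← hp, h])
        have hpgt : (i:ℕ) < (p:ℕ) := by
          rcases Nat.lt_trichotomy (p:ℕ) (i:ℕ) with h | h | h
          · exfalso
            have h1 : u p = w p := hpre_i _ h
            rw [hp] at h1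
            have : p = i := u.injective h1
            rw [this] at h
            omega
          · exact absurd (Fin.val_injective h) hpne
          · exact h
        have hpge2 : (i:ℕ) + 2 ≤ (p:ℕ) := by omega
        have hkbound : (i:ℕ) + 1 < n := by
          have := p.isLt
          omega
        set k : Fin n := ⟨(i:ℕ)+1, hkbound⟩ with hkdef
        have hkval : (k:ℕ) = (i:ℕ)+1 := rfl
        have hik : (i:ℕ) < (k:ℕ) := by omega
        have hkp : (k:ℕ) < (p:ℕ) := by omega
        have hkpar : (k:ℕ) % 2 ≠ (i:ℕ) % 2 := by omega
        have hwk_ne_a : w k ≠ u i := fun h => by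
          have : k = p := w.injective (h.trans hp.symm)
          rw [this] at hkp; omega
        have hwk_ne_a' : (w k : ℕ) ≠ (u i : ℕ) := fun h => hwk_ne_a (Fin.val_injective h)
        rcases Nat.lt_trichotomy ((w k : ℕ)) ((u i : ℕ)) with hlt1 | heq1 | hgt1
        · -- w k < a : first show w k < b via row i, then 213 pattern
          have hwkb : (w k : ℕ) < (w i : ℕ) := by
            have hm2par : ((u.symm (w k):ℕ)) % 2 = (k:ℕ) % 2 := by
              have := hP (w k)
              rw [w.symm_apply_apply] at this
              omega
            have hm2gt : (i:ℕ) < ((u.symm (w k):ℕ)) := by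
              rcases Nat.lt_trichotomy ((u.symm (w k):ℕ)) (i:ℕ) with h | h | h
              · exfalso
                have h1 : u (u.symm (w k)) = w (u.symm (w k)) := hpre_i _ h
                rw [u.apply_symm_apply] at h1
                have h3 : u.symm (w k) = k := w.injective h1.symm
                rw [h3] at h
                omega
              · exfalso
                have h3 : u.symm (w k) = i := Fin.val_injective h
                have h1 : u i = w k := by rw [← h3, u.apply_symm_apply]
                have : (u i:ℕ) = (w k:ℕ) := congrArg Fin.val h1
                omega
              · exact h
            have hmem : (i, w k) ∈ oddDiagram u := by
              rw [mem_oD]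
              exact ⟨hlt1, hm2gt, by omega⟩
            rw [hD, mem_oD] at hmem
            exact lt_of_lt_of_le hmem.1 (le_refl _)
          have : contains213 w := by
            refine ⟨i, k, p, ?_, ?_, ?_, ?_⟩
            · rw [Fin.lt_def]; omega
            · rw [Fin.lt_def]; omega
            · rw [Fin.lt_def]; omega
            · rw [Fin.lt_def, hp]; omega
          exact hw this
        · exact hwk_ne_a' heq1
        · -- a < w k : column of a
          have hmem : (k, u i) ∈ oddDiagram w := by
            rw [mem_oD, ← hpdef]
            exact ⟨hgt1, hkp, by omega⟩
          rw [← hD, mem_oD] at hmem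
          have h2 := hmem.2.1
          rw [u.symm_apply_apply] at h2
          omega
      -- conditions for the swap (i, q)
      have hvalq : (u i : ℕ) < (u q : ℕ) := by rw [hq]; exact hab
      have hC1 : ∀ k : Fin n, (i:ℕ) < k → (k:ℕ) < q → (k:ℕ) % 2 ≠ (i:ℕ) % 2 → (u k : ℕ) < u i := by
        intro k hik hkq hkpar
        have hne_a : (u k : ℕ) ≠ (u i : ℕ) := fun h => by
          have : k = i := u.injective (Fin.val_injective h)
          rw [this] at hik; omega
        have hne_b : (u k : ℕ) ≠ (w i : ℕ) := fun h => by
          have h1 : u k = u q := by rw [hq]; exact Fin.val_injective h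
          have : k = q := u.injective h1
          rw [this] at hkq; omega
        rcases Nat.lt_trichotomy ((u k : ℕ)) ((u i : ℕ)) with h | h | h
        · exact h
        · exact absurd h hne_a
        · exfalso
          rcases Nat.lt_trichotomy ((u k : ℕ)) ((w i : ℕ)) with h2 | h2 | h2
          · -- a < u k < b : row i
            obtain ⟨hm1, hm2⟩ := hposw k hik hkpar
            have hmem : (i, u k) ∈ oddDiagram w := by
              rw [mem_oD]
              exact ⟨h2, hm1, by omega⟩
            rw [← hD, mem_oD] at hmem
            have h3 := hmem.2.1
            rw [u.symm_apply_apply] at h3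
            omega
          · exact hne_b h2
          · -- u k > b : column of b
            have hmem : (k, w i) ∈ oddDiagram u := by
              rw [mem_oD, ← hqdef]
              exact ⟨h2, hkq, by omega⟩
            rw [hD, mem_oD] at hmem
            have h3 := hmem.2.1
            rw [w.symm_apply_apply] at h3
            omega
      have hC2 : ∀ m : Fin n, (i:ℕ) < m → (m:ℕ) % 2 ≠ (i:ℕ) % 2 →
          ¬((u i : ℕ) < u m ∧ (u m : ℕ) < u q) := by
        rintro m him hmp ⟨h1, h2⟩
        rw [hq] at h2
        obtain ⟨hm1, hm2⟩ := hposw m him hmp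
        have hmem : (i, u m) ∈ oddDiagram w := by
          rw [mem_oD]
          exact ⟨h2, hm1, by omega⟩
        rw [← hD, mem_oD] at hmem
        have h3 := hmem.2.1
        rw [u.symm_apply_apply] at h3
        omega
      have hD' := crit u i q hqgt (hqpar.symm) hvalq hC1 hC2
      set u' := u * Equiv.swap i q with hu'
      have hu'i : u' i = w i := by
        rw [hu']
        show u (Equiv.swap i q i) = w i
        rw [Equiv.swap_apply_left, hq]
      have hu'k : ∀ k : Fin n, k ≠ i → k ≠ q → u' k = u k := by
        intro k h1 h2
        rw [hu']
        show u (Equiv.swap i q k) = u k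
        rw [Equiv.swap_apply_of_ne_of_ne h1 h2]
      have hgi : ¬ ((i:ℕ) + (g+1) < n) := fun h => hidiff (hpre i h)
      have hpre2 : ∀ k : Fin n, (k:ℕ) + g < n → u' k = w k := by
        intro k hk
        have hki : (k:ℕ) ≤ (i:ℕ) := by omega
        rcases Nat.lt_or_eq_of_le hki with h | h
        · rw [hu'k k (fun hh => by rw [hh] at h; omega) (fun hh => by rw [hh] at h; omega)]
          exact hpre_i k h
        · have : k = i := Fin.val_injective h
          rw [this, hu'i]
      have hrec := ih u' (hD'.trans hD) hpre2
      refine Relation.ReflTransGen.head ⟨Equiv.swap i q, ?_, rfl, ?_⟩ hrec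
      · exact ⟨i, q, Ne.symm hqne, rfl⟩
      · rw [← hu']
        have := invLength_lt_swap u i q hqgt hvalq
        rw [← hu'] at this
        exact this

lemma bruhat_invLe {n : ℕ} {x y : Equiv.Perm (Fin n)} (h : bruhatLE x y) :
    invLength x ≤ invLength y := by
  induction h with
  | refl => exact le_refl _
  | tail hs ht ih =>
    obtain ⟨t, _, _, hlt⟩ := ht
    omega

lemma bruhat_antisymm {n : ℕ} {x y : Equiv.Perm (Fin n)} (hxy : bruhatLE x y)
    (hyx : bruhatLE y x) : x = y := by
  rcases Relation.ReflTransGen.cases_head hxy with h | ⟨c, hstep, hc⟩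
  · exact h
  · exfalso
    obtain ⟨t, _, _, hlt⟩ := hstep
    have h1 := bruhat_invLe hc
    have h2 := bruhat_invLe hyx
    omega

theorem stmt10 {n : ℕ} (w : Equiv.Perm (Fin n)) (hw : ¬ contains213 w) :
    (∀ u : Equiv.Perm (Fin n), oddDiagram u = oddDiagram w → bruhatLE u w) ∧
      (∀ w' : Equiv.Perm (Fin n), ¬ contains213 w' → oddDiagram w' = oddDiagram w → w' = w) := by
  have main : ∀ w' : Equiv.Perm (Fin n), ¬ contains213 w' →
      ∀ u : Equiv.Perm (Fin n), oddDiagram u = oddDiagram w' → bruhatLE u w' :=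
    fun w' hw' u hD => climbAux w' hw' n u hD (fun k hk => absurd hk (by omega))
  constructor
  · exact fun u h => main w hw u h
  · intro w' hw' hDD
    exact bruhat_antisymm (main w hw w' hDD) (main w' hw' w hDD.symm)
end
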